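/- Maximal average score under irreducible symmetry: Let G be a finite group acting on finite sets X, Y and T, let f : X × Y → [0,1] and α satisfy f(g·x, g·y) = f(x,y) and α(g·t | g·x) = α(t | x) for all g, x, y, t, let 𝓔 be a state ensemble with label set X on a d-dimensional complex Hilbert space ℋ with Δ(𝓔,f) ≠ 0, and let g ↦ U(g) be a map from G to unitary operators on ℋ such that U(g)·𝓔(x)·U(g)* = 𝓔(g·x) for all g, x, such that A ↦ U(g)·A·U(g)* defines a group action of G on L(ℋ), and such that every operator A ∈ L(ℋ) with U(g)·A·U(g)* = A for all g ∈ G is a scalar multiple of the identity (irreducibility). Let Λ(𝓔_{f,α}) be the largest among all eigenvalues of the operators 𝓔_{f,α}(φ), φ ∈ Y^T. Then E^post_{f,α}(𝓔) = d·|Y|^{|T|−1}·Δ(𝓔,f)·Λ(𝓔_{f,α}). -/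

import Mathlib

open scoped BigOperators
open Matrix
open scoped ComplexOrder

noncomputable section

abbrev Mat (d : ℕ) := Matrix (Fin d) (Fin d) ℂ

def IsStateEnsemble {d : ℕ} {X : Type*} [Fintype X] (E : X → Mat d) : Prop :=
  (∀ x, (E x).PosSemidef) ∧ (∑ x, (E x).trace) = 1

def IsMeasurement {d : ℕ} {Z : Type*} [Fintype Z] (M : Z → Mat d) : Prop :=
  (∀ z, (M z).PosSemidef) ∧ (∑ z, M z) = 1

def IsScore {X Y : Type*} (f : X → Y → ℝ) : Prop :=
  ∀ x y, 0 ≤ f x y ∧ f x y ≤ 1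

def IsPartialInfo {T X : Type*} [Fintype T] (α : T → X → ℝ) : Prop :=
  (∀ t x, 0 ≤ α t x) ∧ ∀ x, (∑ t, α t x) = 1

def IsPostProc {T Y Z : Type*} [Fintype Y] (ν : T → Y → Z → ℝ) : Prop :=
  (∀ t y z, 0 ≤ ν t y z) ∧ ∀ t z, (∑ y, ν t y z) = 1

def Pg {d : ℕ} {X : Type*} [Fintype X] (E M : X → Mat d) : ℝ :=
  ∑ x, ((E x) * (M x)).trace.re

def PgMax {d : ℕ} {X : Type*} [Fintype X] (E : X → Mat d) : ℝ :=
  sSup {p : ℝ | ∃ M : X → Mat d, IsMeasurement M ∧ p = Pg E M}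

def Escore {d : ℕ} {X Y : Type*} [Fintype X] [Fintype Y]
    (f : X → Y → ℝ) (E : X → Mat d) (M : Y → Mat d) : ℝ :=
  ∑ x, ∑ y, f x y * ((E x) * (M y)).trace.re

def EMax {d : ℕ} {X Y : Type*} [Fintype X] [Fintype Y]
    (f : X → Y → ℝ) (E : X → Mat d) : ℝ :=
  sSup {p : ℝ | ∃ M : Y → Mat d, IsMeasurement M ∧ p = Escore f E M}

def Epost {d : ℕ} {X Y T Z : Type*} [Fintype X] [Fintype Y] [Fintype T] [Fintype Z]
    (f : X → Y → ℝ) (α : T → X → ℝ) (E : X → Mat d)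
    (M : Z → Mat d) (ν : T → Y → Z → ℝ) : ℝ :=
  ∑ x, ∑ y, ∑ t, ∑ z, f x y * α t x * ν t y z * ((E x) * (M z)).trace.re

def EpostMax {d : ℕ} {X Y T : Type*} [Fintype X] [Fintype Y] [Fintype T]
    (f : X → Y → ℝ) (α : T → X → ℝ) (E : X → Mat d) : ℝ :=
  sSup {p : ℝ | ∃ (n : ℕ) (M : Fin n → Mat d) (ν : T → Y → Fin n → ℝ),
    IsMeasurement M ∧ IsPostProc ν ∧ p = Epost f α E M ν}

def Eprior {d : ℕ} {X Y T : Type*} [Fintype X] [Fintype Y] [Fintype T]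
    (f : X → Y → ℝ) (α : T → X → ℝ) (E : X → Mat d) (N : T → Y → Mat d) : ℝ :=
  ∑ x, ∑ y, ∑ t, f x y * α t x * ((E x) * (N t y)).trace.re

def EpriorMax {d : ℕ} {X Y T : Type*} [Fintype X] [Fintype Y] [Fintype T]
    (f : X → Y → ℝ) (α : T → X → ℝ) (E : X → Mat d) : ℝ :=
  sSup {p : ℝ | ∃ N : T → Y → Mat d, (∀ t, IsMeasurement (N t)) ∧ p = Eprior f α E N}

def IsCompatible {d : ℕ} {T Y : Type*} [Fintype T] [Fintype Y] (N : T → Y → Mat d) : Prop :=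
  ∃ (n : ℕ) (M : Fin n → Mat d) (ν : T → Y → Fin n → ℝ),
    IsMeasurement M ∧ IsPostProc ν ∧ ∀ t y, N t y = ∑ z, ν t y z • M z

def stdPost {T Y : Type*} [DecidableEq Y] : T → Y → (T → Y) → ℝ :=
  fun t y φ => if y = φ t then 1 else 0

def Δconst {d : ℕ} {X Y : Type*} [Fintype X] [Fintype Y]
    (f : X → Y → ℝ) (E : X → Mat d) : ℝ :=
  ∑ x, ∑ y, f x y * (E x).trace.re

def auxEns {d : ℕ} {X Y : Type*} [Fintype X] [Fintype Y]
    (f : X → Y → ℝ) (E : X → Mat d) (y : Y) : Mat d :=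
  (Δconst f E)⁻¹ • ∑ x, f x y • E x

def auxEnsPost {d : ℕ} {X Y T : Type*} [Fintype X] [Fintype Y] [Fintype T]
    (f : X → Y → ℝ) (α : T → X → ℝ) (E : X → Mat d) (φ : T → Y) : Mat d :=
  ((Fintype.card Y : ℝ) ^ (Fintype.card T - 1) * Δconst f E)⁻¹ •
    ∑ x, ∑ t, (f x (φ t) * α t x) • E x


section Stmt15Helpers

variable {d : ℕ}

lemma rsmulMat (r : ℝ) (A : Mat d) : r • A = (r : ℂ) • A := by
  ext i j; simp [Matrix.smul_apply, Complex.real_smul]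

lemma psd_trace_re_nonneg {A : Mat d} (hA : A.PosSemidef) : 0 ≤ A.trace.re := by
  have h : ∀ i, 0 ≤ (A i i).re := by
    intro i
    have h := hA.re_dotProduct_nonneg (Pi.single i 1)
    simpa [dotProduct, Matrix.mulVec, Pi.single_apply] using h
  simpa [Matrix.trace, Matrix.diag, Complex.re_sum] using Finset.sum_nonneg fun i _ => h i

lemma psd_rsmul {r : ℝ} (hr : 0 ≤ r) {A : Mat d} (hA : A.PosSemidef) : (r • A).PosSemidef := by
  rw [rsmulMat]
  refine Matrix.posSemidef_iff_dotProduct_mulVec.mpr ⟨?_, fun x => ?_⟩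
  · have := hA.1
    simp only [Matrix.IsHermitian, Matrix.conjTranspose_smul]
    rw [this]
    congr 1
    simp [Complex.conj_ofReal]
  · rw [Matrix.smul_mulVec, dotProduct_smul]
    have h0 : (0:ℂ) ≤ (r:ℂ) := by
      rw [Complex.le_def]; simp [hr]
    exact mul_nonneg h0 (hA.dotProduct_mulVec_nonneg x)

lemma psd_sum {ι : Type*} (s : Finset ι) (Ms : ι → Mat d)
    (h : ∀ i ∈ s, (Ms i).PosSemidef) : (∑ i ∈ s, Ms i).PosSemidef := by
  classical
  induction s using Finset.induction_on with
  | empty => simpa using Matrix.PosSemidef.zero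
  | insert _ _ hni ih =>
    rw [Finset.sum_insert hni]
    exact (h _ (Finset.mem_insert_self _ _)).add
      (ih fun i hi => h i (Finset.mem_insert_of_mem hi))

lemma herm_rsmul_sum {ι : Type*} [Fintype ι] (r : ι → ℝ) (Ms : ι → Mat d)
    (h : ∀ i, (Ms i).IsHermitian) : (∑ i, r i • Ms i).IsHermitian := by
  simp only [Matrix.IsHermitian, Matrix.conjTranspose_sum]
  apply Finset.sum_congr rfl
  intro i _
  rw [rsmulMat, Matrix.conjTranspose_smul, (h i).eq]
  congr 1
  simp [Complex.conj_ofReal]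

lemma trace_re_sum_smul_mul {ι : Type*} [Fintype ι] (r : ι → ℝ) (Ms : ι → Mat d) (B : Mat d) :
    ((∑ i, r i • Ms i) * B).trace.re = ∑ i, r i * ((Ms i) * B).trace.re := by
  rw [Matrix.sum_mul, Matrix.trace_sum, Complex.re_sum]
  apply Finset.sum_congr rfl
  intro i _
  rw [Matrix.smul_mul, Matrix.trace_smul]
  simp [Complex.smul_re]

lemma trace_re_mul_sum_smul (B : Mat d) {ι : Type*} [Fintype ι] (r : ι → ℝ) (Ms : ι → Mat d) :
    (B * ∑ i, r i • Ms i).trace.re = ∑ i, r i * (B * Ms i).trace.re := by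
  rw [Matrix.mul_sum, Matrix.trace_sum, Complex.re_sum]
  apply Finset.sum_congr rfl
  intro i _
  rw [mul_smul_comm, Matrix.trace_smul]
  simp [Complex.smul_re]

lemma trace_mul_le {A B : Mat d} (hA : A.IsHermitian) {Λ : ℝ}
    (h : ∀ (l : ℝ) (v : Fin d → ℂ), v ≠ 0 → A.mulVec v = (l : ℂ) • v → l ≤ Λ)
    (hB : B.PosSemidef) : (A * B).trace.re ≤ Λ * B.trace.re := by
  have hDh : ((Λ : ℂ) • (1 : Mat d) - A).IsHermitian := by
    apply Matrix.IsHermitian.sub _ hA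
    simp [Matrix.IsHermitian, Matrix.conjTranspose_smul, Complex.conj_ofReal]
  have hDpsd : ((Λ : ℂ) • (1 : Mat d) - A).PosSemidef := by
    apply hDh.posSemidef_iff_eigenvalues_nonneg.mpr
    intro j
    set w : Fin d → ℂ := ⇑(hDh.eigenvectorBasis j) with hw
    have hmv := hDh.mulVec_eigenvectorBasis j
    have hwne : w ≠ 0 := by
      intro h0
      exact hDh.eigenvectorBasis.orthonormal.ne_zero j (by ext i; exact congrFun h0 i)
    have hAv : A.mulVec w = ((Λ - hDh.eigenvalues j : ℝ) : ℂ) • w := by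
      have h1 : ((Λ : ℂ) • (1 : Mat d) - A).mulVec w
          = (Λ : ℂ) • w - A.mulVec w := by
        rw [Matrix.sub_mulVec, Matrix.smul_mulVec, Matrix.one_mulVec]
      rw [h1] at hmv
      have h2 : (hDh.eigenvalues j : ℝ) • w = ((hDh.eigenvalues j : ℂ)) • w := by
        ext i; simp [Complex.real_smul]
      rw [h2] at hmv
      have := sub_eq_iff_eq_add.mp hmv
      push_cast
      rw [sub_smul]
      rw [this]; module
    have := h _ _ hwne hAv
    linarith [show (0 : Fin d → ℝ) j = 0 from rfl]
  have h0 := by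
    have hprod : (((Λ : ℂ) • (1 : Mat d) - A) * B).PosSemidef → True := fun _ => trivial
    exact trivial
  have key : 0 ≤ ((((Λ : ℂ) • (1 : Mat d) - A)) * B).trace.re := by
    obtain ⟨C, rfl⟩ : ∃ C : Mat d, B = star C * C := by
      open scoped MatrixOrder in exact CStarAlgebra.nonneg_iff_eq_star_mul_self.mp hB.nonneg
    rw [← Matrix.mul_assoc, Matrix.trace_mul_cycle]
    -- 0 ≤ trace (C * D * Cᴴ)
    have : ∀ (M : Mat d), M.PosSemidef → 0 ≤ M.trace.re := by
      intro M hM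
      have h : ∀ i, 0 ≤ (M i i).re := by
        intro i
        have h := hM.re_dotProduct_nonneg (Pi.single i 1)
        simpa [dotProduct, Matrix.mulVec, Pi.single_apply] using h
      simpa [Matrix.trace, Matrix.diag, Complex.re_sum] using Finset.sum_nonneg fun i _ => h i
    exact this _ (hDpsd.mul_mul_conjTranspose_same C)
  have hexp : ((((Λ : ℂ) • (1 : Mat d) - A)) * B).trace.re
      = Λ * B.trace.re - (A * B).trace.re := by
    rw [Matrix.sub_mul, Matrix.smul_mul, Matrix.one_mul, Matrix.trace_sub, Matrix.trace_smul]
    simp [Complex.sub_re, Complex.smul_re, smul_eq_mul, Complex.mul_re, Complex.ofReal_re, Complex.ofReal_im]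
  linarith

lemma vecMulVec_psd (v : Fin d → ℂ) : (Matrix.vecMulVec v (star v)).PosSemidef := by
  refine Matrix.posSemidef_iff_dotProduct_mulVec.mpr ⟨?_, ?_⟩
  · ext i j
    simp [Matrix.conjTranspose_apply, Matrix.vecMulVec_apply, mul_comm]
  · intro x
    have hmv : (Matrix.vecMulVec v (star v)).mulVec x = (star v ⬝ᵥ x) • v := by
      ext i
      simp [Matrix.mulVec, Matrix.vecMulVec_apply, dotProduct, Finset.mul_sum,
        mul_assoc, mul_comm, mul_left_comm]
    rw [hmv]
    have : star x ⬝ᵥ (star v ⬝ᵥ x) • v = (star v ⬝ᵥ x) * (star x ⬝ᵥ v) := by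
      rw [dotProduct_smul]; ring_nf
    rw [this]
    have hconj : star x ⬝ᵥ v = star (star v ⬝ᵥ x) := by
      simp [dotProduct, Finset.sum_comm, mul_comm]
    rw [hconj]
    exact mul_star_self_nonneg _

lemma trace_mul_vecMulVec (A : Mat d) (v : Fin d → ℂ) :
    (A * Matrix.vecMulVec v (star v)).trace = star v ⬝ᵥ A.mulVec v := by
  simp only [Matrix.trace, Matrix.diag, Matrix.mul_apply, Matrix.vecMulVec_apply,
    dotProduct, Matrix.mulVec, Pi.star_apply]
  apply Finset.sum_congr rfl; intro i _
  rw [Finset.mul_sum]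
  apply Finset.sum_congr rfl; intro j _
  ring

lemma trace_vecMulVec (v : Fin d → ℂ) :
    (Matrix.vecMulVec v (star v)).trace = star v ⬝ᵥ v := by
  simp [Matrix.trace, Matrix.diag, Matrix.vecMulVec_apply, dotProduct, mul_comm]

lemma trace_conj_mul {Ug : Mat d} (h1 : Ug * Ugᴴ = 1) (h2 : Ugᴴ * Ug = 1) (A B : Mat d) :
    ((Ug * A * Ugᴴ) * (Ug * B * Ugᴴ)).trace = (A * B).trace := by
  have e1 : (Ug * A * Ugᴴ) * (Ug * B * Ugᴴ) = Ug * (A * (B * Ugᴴ)) := by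
    calc (Ug * A * Ugᴴ) * (Ug * B * Ugᴴ) = Ug * (A * ((Ugᴴ * Ug) * (B * Ugᴴ))) := by
          simp only [Matrix.mul_assoc]
      _ = Ug * (A * (B * Ugᴴ)) := by rw [h2, Matrix.one_mul]
  rw [e1, Matrix.trace_mul_comm]
  have : A * (B * Ugᴴ) * Ug = A * B * (Ugᴴ * Ug) := by simp only [Matrix.mul_assoc]
  rw [this, h2, Matrix.mul_one]

lemma inner_comb {Y T : Type} [Fintype Y] [Fintype T] [DecidableEq T]
    (F : Y → ℝ) (ν : T → Y → ℝ) (hν : ∀ t, ∑ y, ν t y = 1) (t : T) :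
    ∑ φ : T → Y, F (φ t) * ∏ t', ν t' (φ t') = ∑ y, F y * ν t y := by
  have key := Fintype.prod_sum (fun t' y => (if t' = t then F y else 1) * ν t' y)
  have lhs : ∏ t', ∑ y, (if t' = t then F y else 1) * ν t' y = ∑ y, F y * ν t y := by
    rw [Fintype.prod_eq_single t]
    · simp
    · intro t' ht'
      simp [if_neg ht', hν t']
  have rhs : ∀ φ : T → Y, (∏ t', (if t' = t then F (φ t') else 1) * ν t' (φ t'))
      = F (φ t) * ∏ t', ν t' (φ t') := by
    intro φ
    rw [Finset.prod_mul_distrib]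
    congr 1
    rw [Finset.prod_ite_eq' Finset.univ t (fun t' => F (φ t'))]; simp
  rw [lhs] at key
  rw [key]
  apply Finset.sum_congr rfl
  intro φ _
  exact (rhs φ).symm

end Stmt15Helpers

theorem stmt15 {d : ℕ} {G X Y T : Type} [Group G] [Fintype G]
    [Fintype X] [Fintype Y] [Fintype T] [DecidableEq T]
    [MulAction G X] [MulAction G Y] [MulAction G T]
    (f : X → Y → ℝ) (hf : IsScore f)
    (α : T → X → ℝ) (hα : IsPartialInfo α)
    (hfinv : ∀ (g : G) (x : X) (y : Y), f (g • x) (g • y) = f x y)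
    (hαinv : ∀ (g : G) (t : T) (x : X), α (g • t) (g • x) = α t x)
    (E : X → Mat d) (hE : IsStateEnsemble E)
    (U : G → Mat d)
    (hU : ∀ g, U g * (U g)ᴴ = 1 ∧ (U g)ᴴ * U g = 1)
    (hcov : ∀ (g : G) (x : X), U g * E x * (U g)ᴴ = E (g • x))
    (hact1 : ∀ A : Mat d, U 1 * A * (U 1)ᴴ = A)
    (hactmul : ∀ (g g' : G) (A : Mat d),
      U (g * g') * A * (U (g * g'))ᴴ = U g * (U g' * A * (U g')ᴴ) * (U g)ᴴ)
    (hirr : ∀ A : Mat d, (∀ g, U g * A * (U g)ᴴ = A) → ∃ c : ℂ, A = c • (1 : Mat d))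
    (hΔ : Δconst f E ≠ 0)
    (Λ : ℝ)
    (hΛ : IsGreatest {l : ℝ | ∃ (φ : T → Y) (v : Fin d → ℂ),
      v ≠ 0 ∧ (auxEnsPost f α E φ).mulVec v = (l : ℂ) • v} Λ) :
    EpostMax f α E
      = d * (Fintype.card Y : ℝ) ^ (Fintype.card T - 1) * Δconst f E * Λ := by
  classical
  obtain ⟨hEpsd, hEtr⟩ := hE
  obtain ⟨φΛ, vΛ, hvΛ0, hvΛ⟩ := hΛ.1
  have hX : Nonempty X := by
    by_contra h
    rw [not_nonempty_iff] at h
    exact hΔ (by simp [Δconst])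
  have hT : Nonempty T := by
    by_contra h
    rw [not_nonempty_iff] at h
    obtain ⟨x⟩ := hX
    have := hα.2 x
    simp at this
  have hY : Nonempty Y := ⟨φΛ (Classical.arbitrary T)⟩
  have hd0 : d ≠ 0 := by
    rintro rfl
    exact hvΛ0 (funext fun i => absurd i.2 (by omega))
  have hΔpos : 0 < Δconst f E := by
    have hnn : 0 ≤ Δconst f E := by
      apply Finset.sum_nonneg; intro x _
      apply Finset.sum_nonneg; intro y _
      exact mul_nonneg (hf x y).1 (psd_trace_re_nonneg (hEpsd x))
    rcases lt_or_eq_of_le hnn with h | h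
    · exact h
    · exact absurd h.symm hΔ
  set c : ℝ := (Fintype.card Y : ℝ) ^ (Fintype.card T - 1) * Δconst f E with hcdef
  have hcpos : 0 < c := by
    apply mul_pos _ hΔpos
    apply pow_pos
    exact_mod_cast Fintype.card_pos
  set A : (T → Y) → Mat d := fun φ => ∑ x, ∑ t, (f x (φ t) * α t x) • E x with hAdef
  -- relation to the auxiliary ensemble
  have hauxA : ∀ φ, auxEnsPost f α E φ = c⁻¹ • A φ := by
    intro φ
    simp only [auxEnsPost, hAdef, hcdef]
  have hAaux : ∀ φ, A φ = c • auxEnsPost f α E φ := by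
    intro φ
    rw [hauxA φ, smul_smul, mul_inv_cancel₀ (ne_of_gt hcpos), one_smul]
  -- Hermitian / PSD properties of A
  have hAsingle : ∀ φ : T → Y, A φ = ∑ p : X × T, (f p.1 (φ p.2) * α p.2 p.1) • E p.1 := by
    intro φ
    rw [hAdef]
    exact (Fintype.sum_prod_type (f := fun p : X × T => (f p.1 (φ p.2) * α p.2 p.1) • E p.1)).symm
  have hAherm : ∀ φ, (A φ).IsHermitian := by
    intro φ
    rw [hAsingle]
    exact herm_rsmul_sum _ _ (fun p => (hEpsd p.1).1)
  have hApsd : ∀ φ, (A φ).PosSemidef := by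
    intro φ
    rw [hAdef]
    apply psd_sum
    intro x _
    apply psd_sum
    intro t _
    exact psd_rsmul (mul_nonneg (hf x (φ t)).1 (hα.1 t x)) (hEpsd x)
  -- eigenvalue bound for A
  have hAeig : ∀ (φ : T → Y) (l : ℝ) (v : Fin d → ℂ), v ≠ 0 →
      (A φ).mulVec v = (l : ℂ) • v → l ≤ c * Λ := by
    intro φ l v hv hl
    have h1 : (auxEnsPost f α E φ).mulVec v = ((c⁻¹ * l : ℝ) : ℂ) • v := by
      rw [hauxA φ, rsmulMat, Matrix.smul_mulVec, hl, smul_smul]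
      norm_cast
    have hle : c⁻¹ * l ≤ Λ := hΛ.2 ⟨φ, v, hv, h1⟩
    calc l = c * (c⁻¹ * l) := by field_simp
    _ ≤ c * Λ := by nlinarith [hcpos]
  have hAbound : ∀ (φ : T → Y) (B : Mat d), B.PosSemidef →
      ((A φ) * B).trace.re ≤ (c * Λ) * B.trace.re := by
    intro φ B hB
    exact trace_mul_le (hAherm φ) (hAeig φ) hB
  -- trace expansion of A
  have hAtr : ∀ (φ : T → Y) (B : Mat d),
      ((A φ) * B).trace.re = ∑ x, ∑ t, (f x (φ t) * α t x) * ((E x) * B).trace.re := by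
    intro φ B
    rw [hAsingle, trace_re_sum_smul_mul]
    exact Fintype.sum_prod_type (f := fun p : X × T => (f p.1 (φ p.2) * α p.2 p.1) * ((E p.1) * B).trace.re)
  -- the master identity
  have EpostEq : ∀ (n : ℕ) (M : Fin n → Mat d) (ν : T → Y → Fin n → ℝ), IsPostProc ν →
      Epost f α E M ν
        = ∑ φ : T → Y, ((A φ) * (∑ z, (∏ t, ν t (φ t) z) • M z)).trace.re := by
    intro n M ν hν
    have step1 : ∀ φ : T → Y,
        ((A φ) * (∑ z, (∏ t, ν t (φ t) z) • M z)).trace.re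
        = ∑ x, ∑ t, ∑ z, f x (φ t) * α t x *
            ((∏ t', ν t' (φ t') z) * ((E x) * (M z)).trace.re) := by
      intro φ
      rw [hAtr]
      apply Finset.sum_congr rfl; intro x _
      apply Finset.sum_congr rfl; intro t _
      rw [trace_re_mul_sum_smul (E x) (fun z => ∏ t', ν t' (φ t') z) M, Finset.mul_sum]
    simp only [Epost]
    calc ∑ x, ∑ y, ∑ t, ∑ z, f x y * α t x * ν t y z * ((E x) * (M z)).trace.re
        = ∑ x, ∑ t, ∑ z, ∑ y, f x y * α t x * ν t y z * ((E x) * (M z)).trace.re := by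
          apply Finset.sum_congr rfl; intro x _
          rw [Finset.sum_comm]
          apply Finset.sum_congr rfl; intro t _
          rw [Finset.sum_comm]
      _ = ∑ x, ∑ t, ∑ z, (α t x * ((E x) * (M z)).trace.re) * ∑ y, f x y * ν t y z := by
          apply Finset.sum_congr rfl; intro x _
          apply Finset.sum_congr rfl; intro t _
          apply Finset.sum_congr rfl; intro z _
          rw [Finset.mul_sum]
          apply Finset.sum_congr rfl; intro y _
          ring
      _ = ∑ x, ∑ t, ∑ z, (α t x * ((E x) * (M z)).trace.re) *
            ∑ φ : T → Y, f x (φ t) * ∏ t', ν t' (φ t') z := by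
          apply Finset.sum_congr rfl; intro x _
          apply Finset.sum_congr rfl; intro t _
          apply Finset.sum_congr rfl; intro z _
          rw [inner_comb (f x) (fun t' y => ν t' y z) (fun t' => hν.2 t' z) t]
      _ = ∑ x, ∑ t, ∑ z, ∑ φ : T → Y, f x (φ t) * α t x *
            ((∏ t', ν t' (φ t') z) * ((E x) * (M z)).trace.re) := by
          apply Finset.sum_congr rfl; intro x _
          apply Finset.sum_congr rfl; intro t _
          apply Finset.sum_congr rfl; intro z _
          rw [Finset.mul_sum]
          apply Finset.sum_congr rfl; intro φ _
          ring
      _ = ∑ x, ∑ t, ∑ φ : T → Y, ∑ z, f x (φ t) * α t x *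
            ((∏ t', ν t' (φ t') z) * ((E x) * (M z)).trace.re) := by
          apply Finset.sum_congr rfl; intro x _
          apply Finset.sum_congr rfl; intro t _
          exact Finset.sum_comm
      _ = ∑ x, ∑ φ : T → Y, ∑ t, ∑ z, f x (φ t) * α t x *
            ((∏ t', ν t' (φ t') z) * ((E x) * (M z)).trace.re) := by
          apply Finset.sum_congr rfl; intro x _
          exact Finset.sum_comm
      _ = ∑ φ : T → Y, ∑ x, ∑ t, ∑ z, f x (φ t) * α t x *
            ((∏ t', ν t' (φ t') z) * ((E x) * (M z)).trace.re) := Finset.sum_comm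
      _ = ∑ φ : T → Y, ((A φ) * (∑ z, (∏ t, ν t (φ t) z) • M z)).trace.re := by
          apply Finset.sum_congr rfl; intro φ _
          exact (step1 φ).symm
  -- upper bound
  have hub : ∀ p ∈ {p : ℝ | ∃ (n : ℕ) (M : Fin n → Mat d) (ν : T → Y → Fin n → ℝ),
      IsMeasurement M ∧ IsPostProc ν ∧ p = Epost f α E M ν}, p ≤ d * c * Λ := by
    rintro p ⟨n, M, ν, hM, hν, rfl⟩
    rw [EpostEq n M ν hν]
    have hMtpsd : ∀ φ : T → Y, (∑ z, (∏ t, ν t (φ t) z) • M z).PosSemidef := by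
      intro φ
      apply psd_sum
      intro z _
      exact psd_rsmul (Finset.prod_nonneg fun t _ => hν.1 t (φ t) z) (hM.1 z)
    have hMtsum : ∑ φ : T → Y, ∑ z, (∏ t, ν t (φ t) z) • M z = 1 := by
      rw [Finset.sum_comm]
      calc ∑ z, ∑ φ : T → Y, (∏ t, ν t (φ t) z) • M z
          = ∑ z, ((∑ φ : T → Y, ∏ t, ν t (φ t) z) • M z) := by
            apply Finset.sum_congr rfl; intro z _
            rw [Finset.sum_smul]
        _ = ∑ z, M z := by
            apply Finset.sum_congr rfl; intro z _
            have h1 : ∑ φ : T → Y, ∏ t, ν t (φ t) z = 1 := by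
              rw [← Fintype.prod_sum (fun t y => ν t y z)]
              simp [hν.2]
            rw [h1, one_smul]
        _ = 1 := hM.2
    calc ∑ φ : T → Y, ((A φ) * (∑ z, (∏ t, ν t (φ t) z) • M z)).trace.re
        ≤ ∑ φ : T → Y, (c * Λ) * (∑ z, (∏ t, ν t (φ t) z) • M z).trace.re :=
          Finset.sum_le_sum (fun φ _ => hAbound φ _ (hMtpsd φ))
      _ = (c * Λ) * ∑ φ : T → Y, (∑ z, (∏ t, ν t (φ t) z) • M z).trace.re := by
          rw [Finset.mul_sum]
      _ = (c * Λ) * d := by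
          have h2 : ∑ φ : T → Y, (∑ z, (∏ t, ν t (φ t) z) • M z).trace.re
              = ((∑ φ : T → Y, ∑ z, (∏ t, ν t (φ t) z) • M z).trace).re := by
            rw [Matrix.trace_sum, Complex.re_sum]
          rw [h2, hMtsum, Matrix.trace_one]
          simp
      _ = d * c * Λ := by ring
  -- lower bound: explicit covariant measurement
  have hmem : (d : ℝ) * c * Λ ∈ {p : ℝ | ∃ (n : ℕ) (M : Fin n → Mat d) (ν : T → Y → Fin n → ℝ),
      IsMeasurement M ∧ IsPostProc ν ∧ p = Epost f α E M ν} := by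
    -- eigenvector data
    have hnv : (0:ℂ) ≤ star vΛ ⬝ᵥ vΛ := dotProduct_star_self_nonneg vΛ
    set ρ : ℝ := (star vΛ ⬝ᵥ vΛ).re with hρdef
    have hρc : star vΛ ⬝ᵥ vΛ = (ρ : ℂ) := by
      rw [Complex.le_def] at hnv
      apply Complex.ext
      · simp [hρdef]
      · simp [← hnv.2]
    have hρpos : 0 < ρ := by
      have hne : star vΛ ⬝ᵥ vΛ ≠ 0 := fun h0 =>
        hvΛ0 (dotProduct_star_self_eq_zero.mp h0)
      rw [hρc] at hne
      have : ρ ≠ 0 := by exact_mod_cast hne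
      have h0 : (0:ℝ) ≤ ρ := by
        rw [Complex.le_def] at hnv; simpa [hρdef] using hnv.1
      exact lt_of_le_of_ne h0 (Ne.symm this)
    set P : Mat d := ρ⁻¹ • Matrix.vecMulVec vΛ (star vΛ) with hPdef
    have hPpsd : P.PosSemidef := psd_rsmul (inv_nonneg.mpr hρpos.le) (vecMulVec_psd vΛ)
    have hPtr : P.trace = 1 := by
      rw [hPdef, Matrix.trace_smul, _root_.trace_vecMulVec, hρc, Complex.real_smul]
      norm_cast
      field_simp
    have hAv : (A φΛ) *ᵥ vΛ = ((c * Λ : ℝ) : ℂ) • vΛ := by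
      rw [hAaux, rsmulMat, Matrix.smul_mulVec, hvΛ, smul_smul]
      norm_cast
    have hAP : ((A φΛ) * P).trace = ((c * Λ : ℝ) : ℂ) := by
      rw [hPdef, mul_smul_comm, Matrix.trace_smul, trace_mul_vecMulVec, hAv,
        dotProduct_smul, hρc, Complex.real_smul, smul_eq_mul]
      push_cast
      have : (ρ:ℂ) ≠ 0 := by exact_mod_cast hρpos.ne'
      field_simp
    set Q : G → Mat d := fun g => U g * P * (U g)ᴴ with hQdef
    have hQpsd : ∀ g, (Q g).PosSemidef := fun g => hPpsd.mul_mul_conjTranspose_same (U g)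
    have hQtr : ∀ g, (Q g).trace = 1 := by
      intro g
      rw [hQdef]
      show (U g * P * (U g)ᴴ).trace = 1
      rw [Matrix.trace_mul_cycle, (hU g).2, Matrix.one_mul, hPtr]
    have hScomm : ∀ h : G, U h * (∑ g, Q g) * (U h)ᴴ = ∑ g, Q g := by
      intro h
      have e1 : U h * (∑ g, Q g) * (U h)ᴴ = ∑ g, U h * Q g * (U h)ᴴ := by
        rw [Matrix.mul_sum, Matrix.sum_mul]
      rw [e1, Finset.sum_congr rfl (fun g _ => (hactmul h g P).symm)]
      exact Fintype.sum_equiv (Equiv.mulLeft h)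
        (fun g => U (h * g) * P * (U (h * g))ᴴ) Q (fun g => rfl)
    obtain ⟨c₀, hc₀⟩ := hirr _ hScomm
    have hStr : (∑ g, Q g).trace = (Fintype.card G : ℂ) := by
      rw [Matrix.trace_sum]
      simp [hQtr]
    have hc₀d : c₀ * (d : ℂ) = (Fintype.card G : ℂ) := by
      rw [hc₀, Matrix.trace_smul, Matrix.trace_one] at hStr
      simpa [smul_eq_mul] using hStr
    have hdne : (d : ℂ) ≠ 0 := by exact_mod_cast hd0
    have hGne : ((Fintype.card G : ℕ) : ℂ) ≠ 0 := by
      exact_mod_cast (Fintype.card_pos (α := G)).ne'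
    have hGneR : ((Fintype.card G : ℕ) : ℝ) ≠ 0 := by
      exact_mod_cast (Fintype.card_pos (α := G)).ne'
    set r : ℝ := (d : ℝ) / (Fintype.card G : ℝ) with hrdef
    have hrc : (r : ℂ) * c₀ = 1 := by
      rw [hrdef]
      push_cast
      field_simp
      linear_combination hc₀d
    set act : G → (T → Y) → (T → Y) := fun g φ t => g • φ (g⁻¹ • t) with hactdef
    have ACov : ∀ (g : G) (φ : T → Y), A (act g φ) = U g * A φ * (U g)ᴴ := by
      intro g φ
      have rhs1 : U g * A φ * (U g)ᴴ = ∑ x, ∑ t, (f x (φ t) * α t x) • E (g • x) := by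
        rw [hAdef]
        simp only []
        rw [Matrix.mul_sum, Matrix.sum_mul]
        apply Finset.sum_congr rfl; intro x _
        rw [Matrix.mul_sum, Matrix.sum_mul]
        apply Finset.sum_congr rfl; intro t _
        rw [mul_smul_comm, Matrix.smul_mul, hcov g x]
      rw [rhs1, hAdef]
      simp only []
      apply Fintype.sum_equiv ((MulAction.toPerm g).symm : X ≃ X)
      intro x
      apply Fintype.sum_equiv ((MulAction.toPerm g).symm : T ≃ T)
      intro t
      simp only [MulAction.toPerm_symm_apply, smul_inv_smul, hactdef]
      rw [show f x (g • φ (g⁻¹ • t)) = f (g⁻¹ • x) (φ (g⁻¹ • t)) by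
            conv_lhs => rw [← smul_inv_smul g x]
            rw [hfinv]]
      rw [show α t x = α (g⁻¹ • t) (g⁻¹ • x) by
            conv_lhs => rw [← smul_inv_smul g t, ← smul_inv_smul g x]
            rw [hαinv]]
    -- the covariant measurement
    set n : ℕ := Fintype.card (T → Y) with hndef
    set e : Fin n ≃ (T → Y) := (Fintype.equivFin (T → Y)).symm with hedef
    set M' : Fin n → Mat d :=
      fun z => r • ∑ g ∈ Finset.univ.filter (fun g => act g φΛ = e z), Q g with hM'def
    set ν' : T → Y → Fin n → ℝ := fun t y z => if y = e z t then 1 else 0 with hν'def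
    have hrnn : 0 ≤ r := by
      rw [hrdef]
      positivity
    have hM'meas : IsMeasurement M' := by
      constructor
      · intro z
        exact psd_rsmul hrnn (psd_sum _ _ fun g _ => hQpsd g)
      · have h0 : ∑ z, M' z = ∑ φ : T → Y,
            r • ∑ g ∈ Finset.univ.filter (fun g => act g φΛ = φ), Q g :=
          Equiv.sum_comp e
            (fun φ => r • ∑ g ∈ Finset.univ.filter (fun g => act g φΛ = φ), Q g)
        rw [h0, ← Finset.smul_sum, Finset.sum_fiberwise Finset.univ (fun g => act g φΛ) Q]
        rw [hc₀, rsmulMat, smul_smul, hrc, one_smul]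
    have hν'post : IsPostProc ν' := by
      constructor
      · intro t y z
        rw [hν'def]
        dsimp only
        split <;> norm_num
      · intro t z
        rw [hν'def]
        simp
    have hprod : ∀ (φ : T → Y) (z : Fin n),
        (∏ t, ν' t (φ t) z) = if φ = e z then 1 else 0 := by
      intro φ z
      by_cases h : φ = e z
      · rw [if_pos h, h, hν'def]
        simp
      · rw [if_neg h]
        obtain ⟨t0, ht0⟩ : ∃ t, φ t ≠ e z t := by
          by_contra hc
          push_neg at hc
          exact h (funext hc)
        apply Finset.prod_eq_zero (Finset.mem_univ t0)
        rw [hν'def]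
        simp [ht0]
    have hinner : ∀ φ : T → Y, (∑ z, (∏ t, ν' t (φ t) z) • M' z) = M' (e.symm φ) := by
      intro φ
      have h1 : ∀ z : Fin n, (∏ t, ν' t (φ t) z) • M' z
          = if z = e.symm φ then M' z else 0 := by
        intro z
        rw [hprod φ z]
        by_cases h : φ = e z
        · rw [if_pos h, if_pos ((e.symm_apply_eq.mpr h).symm), one_smul]
        · rw [if_neg h, if_neg (by
            intro hz
            exact h (by rw [hz, Equiv.apply_symm_apply])), zero_smul]
      rw [Finset.sum_congr rfl (fun z _ => h1 z)]
      simp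
    -- the score of the covariant measurement
    refine ⟨n, M', ν', hM'meas, hν'post, ?_⟩
    rw [EpostEq n M' ν' hν'post]
    have hscore : ∀ φ : T → Y,
        ((A φ) * (∑ z, (∏ t, ν' t (φ t) z) • M' z)).trace.re
        = r * ∑ g ∈ Finset.univ.filter (fun g => act g φΛ = φ), (c * Λ) := by
      intro φ
      rw [hinner φ, hM'def]
      simp only [Equiv.apply_symm_apply]
      rw [mul_smul_comm, Matrix.trace_smul, Complex.smul_re]
      congr 1
      rw [Matrix.mul_sum, Matrix.trace_sum, Complex.re_sum]
      apply Finset.sum_congr rfl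
      intro g hg
      have hgφ : act g φΛ = φ := (Finset.mem_filter.mp hg).2
      rw [← hgφ, ACov g φΛ, hQdef]
      show ((U g * A φΛ * (U g)ᴴ) * (U g * P * (U g)ᴴ)).trace.re = c * Λ
      rw [trace_conj_mul (hU g).1 (hU g).2, hAP]
      simp
    rw [Finset.sum_congr rfl (fun φ _ => hscore φ), ← Finset.mul_sum,
      Finset.sum_fiberwise Finset.univ (fun g => act g φΛ) (fun _ => c * Λ)]
    rw [Finset.sum_const, Finset.card_univ, nsmul_eq_mul, hrdef]
    field_simp
  have hgreat : IsGreatest {p : ℝ | ∃ (n : ℕ) (M : Fin n → Mat d) (ν : T → Y → Fin n → ℝ),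
      IsMeasurement M ∧ IsPostProc ν ∧ p = Epost f α E M ν} ((d : ℝ) * c * Λ) := ⟨hmem, hub⟩
  have : EpostMax f α E = (d : ℝ) * c * Λ := hgreat.csSup_eq
  rw [this, hcdef]
  ring
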